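/- arXiv:2109.08434 — 3 statements merged into one kernel-verified Lean document; each statement's English description precedes it below -/
import Mathlib

section
/- Let d ≥ 1 be odd and v ∈ 𝒮(ℝ^d). Then for every s ∈ ℝ and every ω in the unit sphere S^{d−1}, (𝒯v)(−s, ω) = (−1)^{(d−1)/2} (𝒯v)(s, −ω). -/
open MeasureTheory Filter Real Set Metric

noncomputable section

/-- `ℝ^d`. -/
abbrev Rd (d : ℕ) : Type := EuclideanSpace ℝ (Fin d)

/-- Fourier transform on `ℝ^d`: `f̂(ξ) = ∫ e^{-i x·ξ} f(x) dx`. -/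
def FT {d : ℕ} (f : Rd d → ℂ) (ξ : Rd d) : ℂ :=
  ∫ x : Rd d, Complex.exp (-Complex.I * ((inner ℝ x ξ : ℝ) : ℂ)) * f x

/-- One-dimensional Fourier transform `ĝ(ν) = ∫ e^{-isν} g(s) ds`. -/
def FT1 (g : ℝ → ℂ) (ν : ℝ) : ℂ :=
  ∫ s : ℝ, Complex.exp (-Complex.I * (s : ℂ) * (ν : ℂ)) * g s

/-- `τ = (d-1)π/4`. -/
def tau (d : ℕ) : ℝ := ((d : ℝ) - 1) * π / 4

/-- `c₀ = (2 (2π)^{d-1})^{-1/2}`. -/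
def c₀ (d : ℕ) : ℝ := ((2 : ℝ) * (2 * π) ^ ((d : ℝ) - 1)) ^ (-(1/2 : ℝ))

/-- The half-wave evolution `(e^{it|D|} f)(x)`. -/
def halfWave {d : ℕ} (f : Rd d → ℂ) (t : ℝ) (x : Rd d) : ℂ :=
  (((2 * π) ^ d : ℝ) : ℂ)⁻¹ *
    ∫ ξ : Rd d, Complex.exp (Complex.I * ((inner ℝ x ξ : ℝ) : ℂ) + Complex.I * (t : ℂ) * (‖ξ‖ : ℂ)) * FT f ξ

/-- `f⁻_ω(s)`. -/
def fm {d : ℕ} (f : Rd d → ℂ) (ω : Rd d) (s : ℝ) : ℂ :=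
  ((2 * π : ℝ) : ℂ)⁻¹ *
    ∫ ν in Iic (0 : ℝ), Complex.exp (Complex.I * (s : ℂ) * (ν : ℂ)) * ((|ν| ^ (((d : ℝ) - 1) / 2) : ℝ) : ℂ) * FT f (ν • ω)

/-- `g⁺_ω(s)`. -/
def gp {d : ℕ} (g : Rd d → ℂ) (ω : Rd d) (s : ℝ) : ℂ :=
  ((2 * π : ℝ) : ℂ)⁻¹ *
    ∫ ν in Ici (0 : ℝ), Complex.exp (Complex.I * (s : ℂ) * (ν : ℂ)) * ((|ν| ^ (((d : ℝ) - 1) / 2) : ℝ) : ℂ) * FT g (ν • ω)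

/-- `(𝒯 v)(s, ω)`. -/
def opT {d : ℕ} (v : Rd d → ℂ) (s : ℝ) (ω : Rd d) : ℂ :=
  (c₀ d : ℂ) * ((2 * π : ℝ) : ℂ)⁻¹ *
    ∫ ν : ℝ, Complex.exp (Complex.I * (s : ℂ) * (ν : ℂ)) * ((|ν| ^ (((d : ℝ) - 1) / 2) : ℝ) : ℂ) *
      (if ν < 0 then Complex.exp (Complex.I * (tau d : ℂ)) else Complex.exp (-Complex.I * (tau d : ℂ))) *
        FT v (ν • ω)

/-- `(∂ₛ𝒯 v)(s, ω)`. -/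
def opdsT {d : ℕ} (v : Rd d → ℂ) (s : ℝ) (ω : Rd d) : ℂ :=
  (c₀ d : ℂ) * ((2 * π : ℝ) : ℂ)⁻¹ *
    ∫ ν : ℝ, Complex.exp (Complex.I * (s : ℂ) * (ν : ℂ)) * (Complex.I * (ν : ℂ)) * ((|ν| ^ (((d : ℝ) - 1) / 2) : ℝ) : ℂ) *
      (if ν < 0 then Complex.exp (Complex.I * (tau d : ℂ)) else Complex.exp (-Complex.I * (tau d : ℂ))) *
        FT v (ν • ω)

/-- Solution of the linear wave equation with data `(u₀, u₁)`. -/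
def waveSol {d : ℕ} (u₀ u₁ : Rd d → ℂ) (t : ℝ) (x : Rd d) : ℂ :=
  (((2 * π) ^ d : ℝ) : ℂ)⁻¹ *
    ∫ ξ : Rd d, Complex.exp (Complex.I * ((inner ℝ x ξ : ℝ) : ℂ)) *
      (((Real.cos (t * ‖ξ‖) : ℝ) : ℂ) * FT u₀ ξ + ((‖ξ‖⁻¹ * Real.sin (t * ‖ξ‖) : ℝ) : ℂ) * FT u₁ ξ)

/-- Time derivative `∂ₜ u`. -/
def dt {d : ℕ} (u : ℝ → Rd d → ℂ) (t : ℝ) (x : Rd d) : ℂ :=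
  deriv (fun t' : ℝ => u t' x) t

/-- Spatial partial derivative `∂ⱼ u`. -/
def dx {d : ℕ} (u : ℝ → Rd d → ℂ) (t : ℝ) (x : Rd d) (j : Fin d) : ℂ :=
  fderiv ℝ (fun y : Rd d => u t y) x (EuclideanSpace.single j 1)

/-- Surface measure on the unit sphere of `ℝ^d`. -/
def sphMeasure (d : ℕ) : Measure (sphere (0 : Rd d) 1) :=
  (volume : Measure (Rd d)).toSphere


/-- Symmetry of `𝒯` in odd dimension. -/
theorem opT_symmetry_odd (d : ℕ) (hd : 1 ≤ d) (hodd : Odd d) (v : SchwartzMap (Rd d) ℂ) :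
    ∀ (s : ℝ) (ω : Rd d), ‖ω‖ = 1 →
      opT (⇑v) (-s) ω = (-1 : ℂ) ^ ((d - 1) / 2) * opT (⇑v) s (-ω) := by
  obtain ⟨k, hk⟩ := hodd
  intro s ω hω
  have hk2 : (d - 1) / 2 = k := by omega
  have hτ : Complex.exp (Complex.I * (tau d : ℂ)) * Complex.exp (Complex.I * (tau d : ℂ))
      = (-1 : ℂ) ^ k := by
    rw [← Complex.exp_add]
    have h1 : Complex.I * (tau d : ℂ) + Complex.I * (tau d : ℂ) = (k : ℕ) * (π * Complex.I) := by
      unfold tau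
      have : (d : ℝ) = 2 * k + 1 := by exact_mod_cast congrArg (Nat.cast : ℕ → ℝ) hk
      push_cast [this]
      ring
    rw [h1, Complex.exp_nat_mul, Complex.exp_pi_mul_I]
  have hC1 : Complex.exp (Complex.I * (tau d : ℂ))
      = (-1 : ℂ) ^ k * Complex.exp (-Complex.I * (tau d : ℂ)) := by
    have hne : Complex.exp (Complex.I * (tau d : ℂ)) ≠ 0 := Complex.exp_ne_zero _
    have hneg : (-Complex.I * (tau d : ℂ)) = -(Complex.I * (tau d : ℂ)) := by ring
    rw [hneg, Complex.exp_neg]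
    field_simp
    linear_combination hτ
  have hC2 : Complex.exp (-Complex.I * (tau d : ℂ))
      = (-1 : ℂ) ^ k * Complex.exp (Complex.I * (tau d : ℂ)) := by
    have hsq : ((-1 : ℂ) ^ k) * ((-1 : ℂ) ^ k) = 1 := by
      rw [← pow_add]
      simp [pow_add, ← two_mul, pow_mul]
    calc Complex.exp (-Complex.I * (tau d : ℂ))
        = ((-1 : ℂ) ^ k * (-1 : ℂ) ^ k) * Complex.exp (-Complex.I * (tau d : ℂ)) := by
          rw [hsq, one_mul]
      _ = (-1 : ℂ) ^ k * Complex.exp (Complex.I * (tau d : ℂ)) := by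
          rw [mul_assoc, ← hC1]
  rw [opT, opT, hk2]
  rw [show (-1 : ℂ) ^ k * ((c₀ d : ℂ) * ((2 * π : ℝ) : ℂ)⁻¹ *
      ∫ ν : ℝ, Complex.exp (Complex.I * (s : ℂ) * (ν : ℂ)) *
        ((|ν| ^ (((d : ℝ) - 1) / 2) : ℝ) : ℂ) *
        (if ν < 0 then Complex.exp (Complex.I * (tau d : ℂ))
          else Complex.exp (-Complex.I * (tau d : ℂ))) * FT (⇑v) (ν • -ω))
    = (c₀ d : ℂ) * ((2 * π : ℝ) : ℂ)⁻¹ *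
      ((-1 : ℂ) ^ k * ∫ ν : ℝ, Complex.exp (Complex.I * (s : ℂ) * (ν : ℂ)) *
        ((|ν| ^ (((d : ℝ) - 1) / 2) : ℝ) : ℂ) *
        (if ν < 0 then Complex.exp (Complex.I * (tau d : ℂ))
          else Complex.exp (-Complex.I * (tau d : ℂ))) * FT (⇑v) (ν • -ω)) from by ring]
  congr 1
  rw [← MeasureTheory.integral_const_mul]
  rw [← MeasureTheory.integral_neg_eq_self (μ := volume) (f := fun ν : ℝ =>
      Complex.exp (Complex.I * ((-s : ℝ) : ℂ) * (ν : ℂ)) *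
        ((|ν| ^ (((d : ℝ) - 1) / 2) : ℝ) : ℂ) *
        (if ν < 0 then Complex.exp (Complex.I * (tau d : ℂ))
          else Complex.exp (-Complex.I * (tau d : ℂ))) * FT (⇑v) (ν • ω))]
  apply MeasureTheory.integral_congr_ae
  have h0 : ∀ᵐ ν : ℝ, ν ≠ 0 := by
    rw [MeasureTheory.ae_iff]
    simp [MeasureTheory.measure_singleton]
  filter_upwards [h0] with ν hν
  have hsmul : (-ν) • ω = ν • (-ω) := by rw [neg_smul, smul_neg]
  have habs : |(-ν)| = |ν| := abs_neg ν
  have hexp : Complex.exp (Complex.I * ((-s : ℝ) : ℂ) * ((-ν : ℝ) : ℂ))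
      = Complex.exp (Complex.I * (s : ℂ) * (ν : ℂ)) := by push_cast; ring_nf
  simp only [hsmul, habs, hexp]
  rcases lt_or_gt_of_ne hν with hlt | hgt
  · rw [if_neg (by linarith : ¬ (-ν < 0)), if_pos hlt, hC2]
    ring
  · rw [if_pos (by linarith : -ν < 0), if_neg (by linarith : ¬ ν < 0), hC1]
    ring
end
end

section
/- Let d ≥ 1 and let u₀, u₁ ∈ 𝒮(ℝ^d) be Schwartz functions whose Fourier transforms are compactly supported in ℝ^d ∖ {0}. Define f, g ∈ 𝒮(ℝ^d) by f̂(ξ) = (1/2)(û₀(ξ) + û₁(ξ)/(i|ξ|)) and ĝ(ξ) = (1/2)(û₀(ξ) − û₁(ξ)/(i|ξ|)). Then for every s ∈ ℝ and every ω in the unit sphere S^{d−1}, (∂_s𝒯u₀)(s,ω) − (𝒯u₁)(s,ω) = 2c₀ · (d/ds)( e^{iτ} f⁻_ω(s) + e^{−iτ} g⁺_ω(s) ). -/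
open MeasureTheory Filter Real Set Metric

noncomputable section

lemma norm_exp_ofReal_mul_I' (a : ℂ) (h : a.re = 0) : ‖Complex.exp a‖ = 1 := by
  rw [Complex.norm_exp, h, Real.exp_zero]

lemma ft_continuous {d : ℕ} (u : SchwartzMap (Rd d) ℂ) : Continuous (FT (⇑u)) := by
  apply continuous_of_dominated (bound := fun x => ‖u x‖)
  · intro ξ
    exact ((Complex.continuous_exp.comp (continuous_const.mul
      (Complex.continuous_ofReal.comp ((continuous_id.inner continuous_const))))).mul
        u.continuous).aestronglyMeasurable
  · intro ξ
    filter_upwards with x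
    rw [norm_mul, norm_exp_ofReal_mul_I' _ (by simp), one_mul]
  · exact u.integrable.norm
  · filter_upwards with x
    exact (Complex.continuous_exp.comp (continuous_const.mul
      (Complex.continuous_ofReal.comp (continuous_const.inner continuous_id)))).mul continuous_const

/-- kernel -/
def kerK (d : ℕ) (w : Rd d → ℂ) (ω : Rd d) (ν : ℝ) : ℂ :=
  ((|ν| ^ (((d : ℝ) - 1) / 2) : ℝ) : ℂ) * w (ν • ω)

lemma ker_continuous {d : ℕ} (hd : 1 ≤ d) (w : Rd d → ℂ) (hw : Continuous w) (ω : Rd d) :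
    Continuous (kerK d w ω) := by
  have hα : (0:ℝ) ≤ ((d:ℝ)-1)/2 := by
    have : (1:ℝ) ≤ d := by exact_mod_cast hd
    linarith
  exact (Complex.continuous_ofReal.comp
    (continuous_abs.rpow_const (fun _ => Or.inr hα))).mul
    (hw.comp (continuous_id.smul continuous_const))

lemma ker_compactSupport {d : ℕ} (w : Rd d → ℂ) (hw : HasCompactSupport w)
    (ω : Rd d) (hω : ‖ω‖ = 1) : HasCompactSupport (kerK d w ω) := by
  obtain ⟨R, hR⟩ := hw.isBounded.subset_closedBall 0
  apply HasCompactSupport.intro (isCompact_Icc (a := -R) (b := R))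
  intro ν hν
  have h1 : ν • ω ∉ tsupport w := by
    intro hmem
    have h2 := hR hmem
    rw [mem_closedBall, dist_zero_right, norm_smul, hω, mul_one, Real.norm_eq_abs] at h2
    exact hν ⟨neg_le_of_abs_le h2, le_of_abs_le h2⟩
  simp [kerK, image_eq_zero_of_notMem_tsupport h1]

lemma hasDerivAt_key (k : ℝ → ℂ) (hk : Continuous k) (hks : HasCompactSupport k)
    (S : Set ℝ) (s : ℝ) :
    HasDerivAt (fun s' : ℝ => ∫ ν in S, Complex.exp (Complex.I * (s' : ℂ) * (ν : ℂ)) * k ν)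
      (∫ ν in S, Complex.exp (Complex.I * (s : ℂ) * (ν : ℂ)) * (Complex.I * (ν : ℂ)) * k ν) s := by
  have hbc : Continuous (fun ν : ℝ => |ν| * ‖k ν‖) := continuous_abs.mul hk.norm
  have hbs : HasCompactSupport (fun ν : ℝ => |ν| * ‖k ν‖) := by
    apply HasCompactSupport.intro hks.isCompact
    intro ν hν
    simp [image_eq_zero_of_notMem_tsupport hν]
  have hb : Integrable (fun ν : ℝ => |ν| * ‖k ν‖) (volume.restrict S) :=
    (hbc.integrable_of_hasCompactSupport hbs).restrict
  have hcont : ∀ t : ℝ, Continuous fun ν : ℝ =>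
      Complex.exp (Complex.I * (t : ℂ) * (ν : ℂ)) * k ν := fun t =>
    (Complex.continuous_exp.comp (continuous_const.mul Complex.continuous_ofReal)).mul hk
  have hcont' : Continuous fun ν : ℝ =>
      Complex.exp (Complex.I * (s : ℂ) * (ν : ℂ)) * (Complex.I * (ν : ℂ)) * k ν :=
    (((Complex.continuous_exp.comp (continuous_const.mul Complex.continuous_ofReal)).mul
      (continuous_const.mul Complex.continuous_ofReal)).mul hk)
  have hsupp : HasCompactSupport fun ν : ℝ =>
      Complex.exp (Complex.I * (s : ℂ) * (ν : ℂ)) * k ν := by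
    apply HasCompactSupport.intro hks.isCompact
    intro ν hν
    simp [image_eq_zero_of_notMem_tsupport hν]
  have key := hasDerivAt_integral_of_dominated_loc_of_deriv_le
    (F := fun (t : ℝ) (ν : ℝ) => Complex.exp (Complex.I * (t : ℂ) * (ν : ℂ)) * k ν)
    (F' := fun (t : ℝ) (ν : ℝ) =>
      Complex.exp (Complex.I * (t : ℂ) * (ν : ℂ)) * (Complex.I * (ν : ℂ)) * k ν)
    (bound := fun ν : ℝ => |ν| * ‖k ν‖) (μ := volume.restrict S) (x₀ := s)
    (Metric.ball_mem_nhds s one_pos)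
    (Eventually.of_forall fun t => ((hcont t).aestronglyMeasurable))
    (((hcont s).integrable_of_hasCompactSupport hsupp).restrict)
    hcont'.aestronglyMeasurable
    ?_ hb ?_
  · exact key.2
  · filter_upwards with ν t _
    rw [norm_mul, norm_mul, norm_exp_ofReal_mul_I' _ (by simp), one_mul, norm_mul,
      Complex.norm_I, one_mul, Complex.norm_real, Real.norm_eq_abs]
  · filter_upwards with ν t _
    have h1 : HasDerivAt (fun t : ℝ => ((t : ℂ))) 1 t := by
      simpa using (hasDerivAt_id t).ofReal_comp
    have h2 : HasDerivAt (fun t : ℝ => Complex.I * (t : ℂ) * (ν : ℂ))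
        (Complex.I * (ν : ℂ)) t := by
      have := (h1.const_mul Complex.I).mul_const ((ν : ℂ))
      simpa [mul_comm, mul_assoc, mul_left_comm] using this
    have h3 := h2.cexp.mul_const (k ν)
    convert h3 using 1

lemma ker_integrable {d : ℕ} (hd : 1 ≤ d) (w : Rd d → ℂ) (hwc : Continuous w)
    (hws : HasCompactSupport w) (ω : Rd d) (hω : ‖ω‖ = 1) (S : Set ℝ) :
    Integrable (kerK d w ω) (volume.restrict S) :=
  ((ker_continuous hd w hwc ω).integrable_of_hasCompactSupport
    (ker_compactSupport w hws ω hω)).restrict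


lemma alg_neg (E c a b M v : ℂ) (hv : v ≠ 0) :
    E * (Complex.I * v) * M * c * a - E * M * c * b =
      2 * c * (E * (Complex.I * v) * (M * (1 / 2 * (a + b / (Complex.I * -v))))) := by
  have hI : Complex.I ≠ 0 := Complex.I_ne_zero
  field_simp
  ring

lemma alg_pos (E c a b M v : ℂ) (hv : v ≠ 0) :
    E * (Complex.I * v) * M * c * a - E * M * c * b =
      2 * c * (E * (Complex.I * v) * (M * (1 / 2 * (a - b / (Complex.I * v))))) := by
  have hI : Complex.I ≠ 0 := Complex.I_ne_zero
  field_simp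

def It0 (d : ℕ) (w : Rd d → ℂ) (s : ℝ) (ω : Rd d) (ν : ℝ) : ℂ :=
  Complex.exp (Complex.I * (s : ℂ) * (ν : ℂ)) * (Complex.I * (ν : ℂ)) *
    ((|ν| ^ (((d : ℝ) - 1) / 2) : ℝ) : ℂ) *
    (if ν < 0 then Complex.exp (Complex.I * (tau d : ℂ)) else Complex.exp (-Complex.I * (tau d : ℂ))) *
      w (ν • ω)

def It1 (d : ℕ) (w : Rd d → ℂ) (s : ℝ) (ω : Rd d) (ν : ℝ) : ℂ :=
  Complex.exp (Complex.I * (s : ℂ) * (ν : ℂ)) *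
    ((|ν| ^ (((d : ℝ) - 1) / 2) : ℝ) : ℂ) *
    (if ν < 0 then Complex.exp (Complex.I * (tau d : ℂ)) else Complex.exp (-Complex.I * (tau d : ℂ))) *
      w (ν • ω)

lemma opdsT_eq {d : ℕ} (v : Rd d → ℂ) (s : ℝ) (ω : Rd d) :
    opdsT v s ω = (c₀ d : ℂ) * ((2 * π : ℝ) : ℂ)⁻¹ * ∫ ν : ℝ, It0 d (FT v) s ω ν := rfl

lemma opT_eq {d : ℕ} (v : Rd d → ℂ) (s : ℝ) (ω : Rd d) :
    opT v s ω = (c₀ d : ℂ) * ((2 * π : ℝ) : ℂ)⁻¹ * ∫ ν : ℝ, It1 d (FT v) s ω ν := rfl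

lemma norm_It0 {d : ℕ} (w : Rd d → ℂ) (s : ℝ) (ω : Rd d) (ν : ℝ) :
    ‖It0 d w s ω ν‖ = |ν| * ‖kerK d w ω ν‖ := by
  have hE : ‖Complex.exp (Complex.I * (s : ℂ) * (ν : ℂ))‖ = 1 :=
    norm_exp_ofReal_mul_I' _ (by simp)
  have hχ : ‖(if ν < 0 then Complex.exp (Complex.I * (tau d : ℂ))
      else Complex.exp (-Complex.I * (tau d : ℂ)))‖ = 1 := by
    split
    · exact norm_exp_ofReal_mul_I' _ (by simp)
    · exact norm_exp_ofReal_mul_I' _ (by simp)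
  simp only [It0, kerK, norm_mul, hE, hχ, Complex.norm_I, Complex.norm_real,
    Real.norm_eq_abs, one_mul, mul_one]
  ring

lemma norm_It1 {d : ℕ} (w : Rd d → ℂ) (s : ℝ) (ω : Rd d) (ν : ℝ) :
    ‖It1 d w s ω ν‖ = ‖kerK d w ω ν‖ := by
  have hE : ‖Complex.exp (Complex.I * (s : ℂ) * (ν : ℂ))‖ = 1 :=
    norm_exp_ofReal_mul_I' _ (by simp)
  have hχ : ‖(if ν < 0 then Complex.exp (Complex.I * (tau d : ℂ))
      else Complex.exp (-Complex.I * (tau d : ℂ)))‖ = 1 := by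
    split
    · exact norm_exp_ofReal_mul_I' _ (by simp)
    · exact norm_exp_ofReal_mul_I' _ (by simp)
  simp only [It1, kerK, norm_mul, hE, hχ, Complex.norm_I, Complex.norm_real,
    Real.norm_eq_abs, one_mul, mul_one]

lemma meas_aux {d : ℕ} (hd : 1 ≤ d) (w : Rd d → ℂ) (hw : Continuous w) (s : ℝ) (ω : Rd d) :
    AEStronglyMeasurable (It0 d w s ω) volume ∧ AEStronglyMeasurable (It1 d w s ω) volume := by
  have h1 : (1:ℝ) ≤ d := by exact_mod_cast hd
  have hα : (0:ℝ) ≤ ((d : ℝ) - 1) / 2 := by linarith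
  have c1 : Continuous fun ν : ℝ => Complex.exp (Complex.I * (s : ℂ) * (ν : ℂ)) :=
    Complex.continuous_exp.comp (continuous_const.mul Complex.continuous_ofReal)
  have c2 : Continuous fun ν : ℝ => Complex.I * (ν : ℂ) :=
    continuous_const.mul Complex.continuous_ofReal
  have c3 : Continuous fun ν : ℝ => ((|ν| ^ (((d : ℝ) - 1) / 2) : ℝ) : ℂ) :=
    Complex.continuous_ofReal.comp (continuous_abs.rpow_const fun _ => Or.inr hα)
  have c4 : Continuous fun ν : ℝ => w (ν • ω) := hw.comp (continuous_id.smul continuous_const)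
  have mχ : AEStronglyMeasurable (fun ν : ℝ => (if ν < 0 then Complex.exp (Complex.I * (tau d : ℂ))
      else Complex.exp (-Complex.I * (tau d : ℂ)))) volume :=
    (Measurable.ite measurableSet_Iio measurable_const measurable_const).aestronglyMeasurable
  constructor
  · exact ((((c1.mul c2).mul c3).aestronglyMeasurable.mul mχ).mul c4.aestronglyMeasurable)
  · exact (((c1.mul c3).aestronglyMeasurable.mul mχ).mul c4.aestronglyMeasurable)

lemma int_It0 {d : ℕ} (hd : 1 ≤ d) (w : Rd d → ℂ) (hwc : Continuous w)
    (hws : HasCompactSupport w) (s : ℝ) (ω : Rd d) (hω : ‖ω‖ = 1) :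
    Integrable (It0 d w s ω) volume := by
  refine Integrable.mono' ?_ (meas_aux hd w hwc s ω).1
    (Eventually.of_forall fun ν => le_of_eq (norm_It0 w s ω ν))
  exact (continuous_abs.mul (ker_continuous hd w hwc ω).norm).integrable_of_hasCompactSupport
    (by
      apply HasCompactSupport.intro (ker_compactSupport w hws ω hω).isCompact
      intro ν hν
      simp [image_eq_zero_of_notMem_tsupport hν])

lemma int_It1 {d : ℕ} (hd : 1 ≤ d) (w : Rd d → ℂ) (hwc : Continuous w)
    (hws : HasCompactSupport w) (s : ℝ) (ω : Rd d) (hω : ‖ω‖ = 1) :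
    Integrable (It1 d w s ω) volume := by
  refine Integrable.mono' ?_ (meas_aux hd w hwc s ω).2
    (Eventually.of_forall fun ν => le_of_eq (norm_It1 w s ω ν))
  exact ((ker_continuous hd w hwc ω).norm).integrable_of_hasCompactSupport
    (by
      apply HasCompactSupport.intro (ker_compactSupport w hws ω hω).isCompact
      intro ν hν
      simp [image_eq_zero_of_notMem_tsupport hν])


/-- The identity `∂ₛ𝒯u₀ - 𝒯u₁ = 2c₀ ∂ₛ(e^{iτ} f⁻_ω + e^{-iτ} g⁺_ω)`. -/
theorem opT_fg_identity (d : ℕ) (hd : 1 ≤ d) (u₀ u₁ : SchwartzMap (Rd d) ℂ)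
    (hcomp₀ : HasCompactSupport (FT (⇑u₀))) (h0₀ : (0 : Rd d) ∉ tsupport (FT (⇑u₀)))
    (hcomp₁ : HasCompactSupport (FT (⇑u₁))) (h0₁ : (0 : Rd d) ∉ tsupport (FT (⇑u₁)))
    (f g : SchwartzMap (Rd d) ℂ)
    (hf : ∀ ξ : Rd d, FT (⇑f) ξ =
      (1 / 2) * (FT (⇑u₀) ξ + FT (⇑u₁) ξ / (Complex.I * (‖ξ‖ : ℂ))))
    (hg : ∀ ξ : Rd d, FT (⇑g) ξ =
      (1 / 2) * (FT (⇑u₀) ξ - FT (⇑u₁) ξ / (Complex.I * (‖ξ‖ : ℂ)))) :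
    ∀ (s : ℝ) (ω : Rd d), ‖ω‖ = 1 →
      opdsT (⇑u₀) s ω - opT (⇑u₁) s ω =
        2 * (c₀ d : ℂ) *
          deriv (fun s' : ℝ =>
            Complex.exp (Complex.I * (tau d : ℂ)) * fm (⇑f) ω s' +
              Complex.exp (-Complex.I * (tau d : ℂ)) * gp (⇑g) ω s') s :=  by
  intro s ω hω
  have hct0 : Continuous (FT (⇑u₀)) := ft_continuous u₀
  have hct1 : Continuous (FT (⇑u₁)) := ft_continuous u₁
  have hctf : Continuous (FT (⇑f)) := ft_continuous f
  have hctg : Continuous (FT (⇑g)) := ft_continuous g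
  have hzero : ∀ ξ : Rd d, ξ ∉ tsupport (FT (⇑u₀)) → ξ ∉ tsupport (FT (⇑u₁)) →
      FT (⇑f) ξ = 0 ∧ FT (⇑g) ξ = 0 := by
    intro ξ h0 h1
    constructor
    · rw [hf ξ, image_eq_zero_of_notMem_tsupport h0, image_eq_zero_of_notMem_tsupport h1]
      simp
    · rw [hg ξ, image_eq_zero_of_notMem_tsupport h0, image_eq_zero_of_notMem_tsupport h1]
      simp
  have hcf : HasCompactSupport (FT (⇑f)) := by
    refine IsCompact.of_isClosed_subset (hcomp₀.union hcomp₁) (isClosed_tsupport _)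
      (closure_minimal ?_ ((isClosed_tsupport _).union (isClosed_tsupport _)))
    intro ξ hξ
    by_contra hc
    simp only [Set.mem_union, not_or] at hc
    exact hξ ((hzero ξ hc.1 hc.2).1)
  have hcg : HasCompactSupport (FT (⇑g)) := by
    refine IsCompact.of_isClosed_subset (hcomp₀.union hcomp₁) (isClosed_tsupport _)
      (closure_minimal ?_ ((isClosed_tsupport _).union (isClosed_tsupport _)))
    intro ξ hξ
    by_contra hc
    simp only [Set.mem_union, not_or] at hc
    exact hξ ((hzero ξ hc.1 hc.2).2)
  have Hf := hasDerivAt_key (kerK d (FT (⇑f)) ω) (ker_continuous hd _ hctf ω)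
    (ker_compactSupport _ hcf ω hω) (Iic 0) s
  have Hg := hasDerivAt_key (kerK d (FT (⇑g)) ω) (ker_continuous hd _ hctg ω)
    (ker_compactSupport _ hcg ω hω) (Ici 0) s
  have hfm : ∀ s' : ℝ, fm (⇑f) ω s' =
      ((2 * π : ℝ) : ℂ)⁻¹ * ∫ ν in Iic (0:ℝ),
        Complex.exp (Complex.I * (s' : ℂ) * (ν : ℂ)) * kerK d (FT (⇑f)) ω ν := by
    intro s'
    unfold fm kerK
    simp only [mul_assoc]
  have hgp : ∀ s' : ℝ, gp (⇑g) ω s' =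
      ((2 * π : ℝ) : ℂ)⁻¹ * ∫ ν in Ici (0:ℝ),
        Complex.exp (Complex.I * (s' : ℂ) * (ν : ℂ)) * kerK d (FT (⇑g)) ω ν := by
    intro s'
    unfold gp kerK
    simp only [mul_assoc]
  have Hsum : HasDerivAt (fun s' : ℝ =>
      Complex.exp (Complex.I * (tau d : ℂ)) * fm (⇑f) ω s' +
        Complex.exp (-Complex.I * (tau d : ℂ)) * gp (⇑g) ω s')
      (Complex.exp (Complex.I * (tau d : ℂ)) * (((2 * π : ℝ) : ℂ)⁻¹ *
        ∫ ν in Iic (0:ℝ), Complex.exp (Complex.I * (s : ℂ) * (ν : ℂ)) *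
          (Complex.I * (ν : ℂ)) * kerK d (FT (⇑f)) ω ν) +
       Complex.exp (-Complex.I * (tau d : ℂ)) * (((2 * π : ℝ) : ℂ)⁻¹ *
        ∫ ν in Ici (0:ℝ), Complex.exp (Complex.I * (s : ℂ) * (ν : ℂ)) *
          (Complex.I * (ν : ℂ)) * kerK d (FT (⇑g)) ω ν)) s := by
    have h1 := (Hf.const_mul (((2 * π : ℝ) : ℂ)⁻¹)).const_mul
      (Complex.exp (Complex.I * (tau d : ℂ)))
    have h2 := (Hg.const_mul (((2 * π : ℝ) : ℂ)⁻¹)).const_mul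
      (Complex.exp (-Complex.I * (tau d : ℂ)))
    have h3 := h1.add h2
    simp only [← hfm, ← hgp] at h3
    exact h3
  rw [Hsum.deriv, opdsT_eq, opT_eq]
  have hi0 : Integrable (It0 d (FT (⇑u₀)) s ω) volume := int_It0 hd _ hct0 hcomp₀ s ω hω
  have hi1 : Integrable (It1 d (FT (⇑u₁)) s ω) volume := int_It1 hd _ hct1 hcomp₁ s ω hω
  have hsplit0 := (intervalIntegral.integral_Iio_add_Ici (b := (0:ℝ)) hi0.integrableOn hi0.integrableOn).symm
  have hsplit1 := (intervalIntegral.integral_Iio_add_Ici (b := (0:ℝ)) hi1.integrableOn hi1.integrableOn).symm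
  have hneg : ∀ ν ∈ Iio (0:ℝ), It0 d (FT (⇑u₀)) s ω ν - It1 d (FT (⇑u₁)) s ω ν =
      2 * Complex.exp (Complex.I * (tau d : ℂ)) *
        (Complex.exp (Complex.I * (s : ℂ) * (ν : ℂ)) * (Complex.I * (ν : ℂ)) *
          kerK d (FT (⇑f)) ω ν) := by
    intro ν hν
    rw [mem_Iio] at hν
    have hν0 : (ν : ℂ) ≠ 0 := Complex.ofReal_ne_zero.mpr hν.ne
    have hnrm : ((‖ν • ω‖ : ℝ) : ℂ) = -(ν : ℂ) := by
      rw [norm_smul, hω, mul_one, Real.norm_eq_abs, abs_of_neg hν]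
      push_cast
      ring
    simp only [It0, It1, kerK, hf (ν • ω), if_pos hν, hnrm]
    exact alg_neg _ _ _ _ _ _ hν0
  have hpos : ∀ ν ∈ Ici (0:ℝ), It0 d (FT (⇑u₀)) s ω ν - It1 d (FT (⇑u₁)) s ω ν =
      2 * Complex.exp (-Complex.I * (tau d : ℂ)) *
        (Complex.exp (Complex.I * (s : ℂ) * (ν : ℂ)) * (Complex.I * (ν : ℂ)) *
          kerK d (FT (⇑g)) ω ν) := by
    intro ν hν
    rw [mem_Ici] at hν
    rcases eq_or_lt_of_le hν with h | h
    · simp [It0, It1, kerK, ← h, image_eq_zero_of_notMem_tsupport h0₁]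
    · have hν0 : (ν : ℂ) ≠ 0 := Complex.ofReal_ne_zero.mpr h.ne'
      have hnrm : ((‖ν • ω‖ : ℝ) : ℂ) = (ν : ℂ) := by
        rw [norm_smul, hω, mul_one, Real.norm_eq_abs, abs_of_pos h]
      simp only [It0, It1, kerK, hg (ν • ω), if_neg (not_lt.mpr h.le), hnrm]
      exact alg_pos _ _ _ _ _ _ hν0
  have e1 : (∫ ν in Iio (0:ℝ), It0 d (FT (⇑u₀)) s ω ν) -
      (∫ ν in Iio (0:ℝ), It1 d (FT (⇑u₁)) s ω ν) =
      2 * Complex.exp (Complex.I * (tau d : ℂ)) *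
        ∫ ν in Iic (0:ℝ), Complex.exp (Complex.I * (s : ℂ) * (ν : ℂ)) *
          (Complex.I * (ν : ℂ)) * kerK d (FT (⇑f)) ω ν := by
    rw [← integral_sub hi0.integrableOn hi1.integrableOn,
      setIntegral_congr_fun measurableSet_Iio (fun ν hν => hneg ν hν),
      integral_const_mul, integral_Iic_eq_integral_Iio]
  have e2 : (∫ ν in Ici (0:ℝ), It0 d (FT (⇑u₀)) s ω ν) -
      (∫ ν in Ici (0:ℝ), It1 d (FT (⇑u₁)) s ω ν) =
      2 * Complex.exp (-Complex.I * (tau d : ℂ)) *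
        ∫ ν in Ici (0:ℝ), Complex.exp (Complex.I * (s : ℂ) * (ν : ℂ)) *
          (Complex.I * (ν : ℂ)) * kerK d (FT (⇑g)) ω ν := by
    rw [← integral_sub hi0.integrableOn hi1.integrableOn,
      setIntegral_congr_fun measurableSet_Ici (fun ν hν => hpos ν hν),
      integral_const_mul]
  rw [hsplit0, hsplit1]
  linear_combination ((c₀ d : ℂ) * ((2 * π : ℝ) : ℂ)⁻¹) * e1 +
    ((c₀ d : ℂ) * ((2 * π : ℝ) : ℂ)⁻¹) * e2
end
end

section
/- Let d ≥ 1, f ∈ 𝒮(ℝ^d), ω a unit vector in ℝ^d, and s ∈ ℝ. Then the Radon transform of f, given by the integral of f over the affine hyperplane {y ∈ ℝ^d : ω·y = s}, equals the inverse one-dimensional Fourier transform of ν ↦ f̂(νω) evaluated at s: ∫_{ω^⊥} f(sω + y) dλ_{ω^⊥}(y) = (2π)^{−1} ∫_ℝ e^{isν} f̂(νω) dν, where ω^⊥ = {y ∈ ℝ^d : y·ω = 0} and λ_{ω^⊥} is the (d−1)-dimensional Lebesgue (Haar) measure on the subspace ω^⊥. -/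
open MeasureTheory Filter Real Set Metric

noncomputable section

section RadonAux

open FourierTransform

variable {d : ℕ} {ω : Rd d}

lemma omega_ne_zero (hω : ‖ω‖ = 1) : ω ≠ 0 := by
  intro h; rw [h, norm_zero] at hω; norm_num at hω

def sliceLE (hω : ‖ω‖ = 1) :
    WithLp 2 (ℝ × ((ℝ ∙ ω)ᗮ : Submodule ℝ (Rd d))) ≃ₗ[ℝ] Rd d :=
  (WithLp.linearEquiv 2 ℝ _).trans
    (((LinearEquiv.toSpanNonzeroSingleton ℝ _ ω (omega_ne_zero hω)).prodCongr
        (LinearEquiv.refl ℝ _)).trans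
      (Submodule.prodEquivOfIsCompl _ _ Submodule.isCompl_orthogonal_of_hasOrthogonalProjection))

lemma sliceLE_apply (hω : ‖ω‖ = 1) (p : WithLp 2 (ℝ × ((ℝ ∙ ω)ᗮ : Submodule ℝ (Rd d)))) :
    sliceLE hω p = p.fst • ω + (p.snd : Rd d) := by
  simp [sliceLE, Submodule.coe_prodEquivOfIsCompl']

lemma inner_omega_mem_orthogonal {y : Rd d} (hy : y ∈ (ℝ ∙ ω)ᗮ) : (inner ℝ ω y : ℝ) = 0 :=
  (Submodule.mem_orthogonal _ _).1 hy ω (Submodule.mem_span_singleton_self ω)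

def sliceLI (hω : ‖ω‖ = 1) :
    WithLp 2 (ℝ × ((ℝ ∙ ω)ᗮ : Submodule ℝ (Rd d))) ≃ₗᵢ[ℝ] Rd d :=
  (sliceLE hω).isometryOfInner (by
    intro p q
    rw [sliceLE_apply, sliceLE_apply]
    have h1 : (inner ℝ ω (q.snd : Rd d) : ℝ) = 0 := inner_omega_mem_orthogonal q.snd.2
    have h2 : (inner ℝ (p.snd : Rd d) ω : ℝ) = 0 := by
      rw [real_inner_comm]; exact inner_omega_mem_orthogonal p.snd.2
    have h3 : (inner ℝ ω ω : ℝ) = 1 := by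
      rw [real_inner_self_eq_norm_sq, hω]; norm_num
    simp only [inner_add_left, inner_add_right, real_inner_smul_left, real_inner_smul_right,
      h1, h2, h3, WithLp.prod_inner_apply, WithLp.ofLp_fst, WithLp.ofLp_snd, Submodule.coe_inner, RCLike.inner_apply,
      starRingEnd_apply, star_trivial]
    ring)

lemma sliceLI_apply (hω : ‖ω‖ = 1) (p : WithLp 2 (ℝ × ((ℝ ∙ ω)ᗮ : Submodule ℝ (Rd d)))) :
    sliceLI hω p = p.fst • ω + (p.snd : Rd d) := sliceLE_apply hω p

def b1 : OrthonormalBasis (Fin 1) ℝ ℝ :=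
  (Module.Basis.singleton (Fin 1) ℝ).toOrthonormalBasis (by
    constructor
    · intro i; simp [Module.Basis.singleton_apply]
    · intro i j h; exact absurd (Subsingleton.elim i j) h)

lemma b1_apply (i : Fin 1) : b1 i = 1 := by
  exact (congrFun (Module.Basis.coe_toOrthonormalBasis _ _) i).trans
    (Module.Basis.singleton_apply _ _ _)

variable (hω : ‖ω‖ = 1)

def bigB (hω : ‖ω‖ = 1) :
    OrthonormalBasis (Fin 1 ⊕ Fin (Module.finrank ℝ ((ℝ ∙ ω)ᗮ : Submodule ℝ (Rd d)))) ℝ (Rd d) :=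
  ((b1.prod (stdOrthonormalBasis ℝ _)).map (sliceLI hω))

lemma bigB_inl (j : Fin 1) : bigB hω (Sum.inl j) = ω := by
  rw [bigB, OrthonormalBasis.map_apply, OrthonormalBasis.prod_apply, sliceLI_apply]
  simp [b1_apply]

lemma bigB_inr (j : Fin (Module.finrank ℝ ((ℝ ∙ ω)ᗮ : Submodule ℝ (Rd d)))) :
    bigB hω (Sum.inr j) = (stdOrthonormalBasis ℝ ((ℝ ∙ ω)ᗮ : Submodule ℝ (Rd d)) j : Rd d) := by
  rw [bigB, OrthonormalBasis.map_apply, OrthonormalBasis.prod_apply, sliceLI_apply]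
  simp

lemma mpT (hω : ‖ω‖ = 1) :
    MeasurePreserving
      (fun p : ℝ × ((ℝ ∙ ω)ᗮ : Submodule ℝ (Rd d)) => p.1 • ω + (p.2 : Rd d))
      (volume.prod volume) volume := by
  classical
  set K := ((ℝ ∙ ω)ᗮ : Submodule ℝ (Rd d))
  set n := Module.finrank ℝ K
  set bK := stdOrthonormalBasis ℝ K
  have m1 : MeasurePreserving (Prod.map (⇑b1.repr) (⇑bK.repr))
      (volume.prod volume) (volume.prod volume) :=
    b1.measurePreserving_repr.prod bK.measurePreserving_repr
  have m2 : MeasurePreserving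
      (Prod.map (⇑(MeasurableEquiv.toLp 2 (Fin 1 → ℝ)).symm)
        (⇑(MeasurableEquiv.toLp 2 (Fin n → ℝ)).symm))
      (volume.prod volume) (volume.prod volume) :=
    (EuclideanSpace.volume_preserving_symm_measurableEquiv_toLp (Fin 1)).prod
      (EuclideanSpace.volume_preserving_symm_measurableEquiv_toLp (Fin n))
  have m3 : MeasurePreserving
      (⇑(MeasurableEquiv.sumPiEquivProdPi (fun _ : Fin 1 ⊕ Fin n => ℝ)).symm)
      (volume.prod volume) volume :=
    MeasureTheory.volume_measurePreserving_sumPiEquivProdPi_symm _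
  have m4 : MeasurePreserving (⇑(WithLp.equiv 2 (Fin 1 ⊕ Fin n → ℝ)).symm)
      volume volume := PiLp.volume_preserving_toLp _
  have m5 : MeasurePreserving (⇑(bigB hω).repr.symm) volume volume :=
    (bigB hω).measurePreserving_repr_symm
  have mcomp := m5.comp (m4.comp (m3.comp (m2.comp m1)))
  convert mcomp using 1
  funext p
  obtain ⟨p1, p2⟩ := p
  simp only [Function.comp_apply, Prod.map_apply]
  set x : EuclideanSpace ℝ (Fin 1 ⊕ Fin n) :=
    (WithLp.equiv 2 (Fin 1 ⊕ Fin n → ℝ)).symm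
      ((MeasurableEquiv.sumPiEquivProdPi (fun _ : Fin 1 ⊕ Fin n => ℝ)).symm
        ((MeasurableEquiv.toLp 2 (Fin 1 → ℝ)).symm (b1.repr p1),
         (MeasurableEquiv.toLp 2 (Fin n → ℝ)).symm (bK.repr p2))) with hx
  have hxl : ∀ j : Fin 1, x (Sum.inl j) = b1.repr p1 j := by
    intro j
    simp [hx, MeasurableEquiv.sumPiEquivProdPi, MeasurableEquiv.toLp]
    rfl
  have hxr : ∀ j : Fin n, x (Sum.inr j) = bK.repr p2 j := by
    intro j
    simp [hx, MeasurableEquiv.sumPiEquivProdPi, MeasurableEquiv.toLp]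
    rfl
  have : (bigB hω).repr.symm x = ∑ i, x i • bigB hω i :=
    ((bigB hω).sum_repr_symm x).symm
  rw [this, Fintype.sum_sum_type]
  have h1 : ∑ j : Fin 1, x (Sum.inl j) • bigB hω (Sum.inl j) = p1 • ω := by
    simp only [hxl, bigB_inl]
    rw [Fin.sum_univ_one]
    congr 1
    have := b1.sum_repr p1
    rw [Fin.sum_univ_one] at this
    simpa [b1_apply, smul_eq_mul] using this
  have h2 : ∑ j : Fin n, x (Sum.inr j) • bigB hω (Sum.inr j) = (p2 : Rd d) := by
    simp only [hxr, bigB_inr]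
    have := bK.sum_repr p2
    calc ∑ j, bK.repr p2 j • (bK j : Rd d)
        = ((∑ j, bK.repr p2 j • bK j : K) : Rd d) := by push_cast; rfl
      _ = (p2 : Rd d) := by rw [this]
  rw [h1, h2]

def sliceCLE (hω : ‖ω‖ = 1) :
    (ℝ × ((ℝ ∙ ω)ᗮ : Submodule ℝ (Rd d))) ≃L[ℝ] Rd d :=
  (WithLp.prodContinuousLinearEquiv 2 ℝ ℝ _).symm.trans
    (sliceLI hω).toContinuousLinearEquiv

lemma sliceCLE_apply (hω : ‖ω‖ = 1) (p : ℝ × ((ℝ ∙ ω)ᗮ : Submodule ℝ (Rd d))) :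
    sliceCLE hω p = p.1 • ω + (p.2 : Rd d) := by
  rw [sliceCLE]
  simp only [ContinuousLinearEquiv.trans_apply]
  rw [show (sliceLI hω).toContinuousLinearEquiv
      ((WithLp.prodContinuousLinearEquiv 2 ℝ ℝ _).symm p) =
      sliceLI hω ((WithLp.equiv 2 _).symm p) from rfl]
  rw [sliceLI_apply]
  rfl

lemma meT (hω : ‖ω‖ = 1) :
    MeasurableEmbedding
      (fun p : ℝ × ((ℝ ∙ ω)ᗮ : Submodule ℝ (Rd d)) => p.1 • ω + (p.2 : Rd d)) := by
  have : (fun p : ℝ × ((ℝ ∙ ω)ᗮ : Submodule ℝ (Rd d)) => p.1 • ω + (p.2 : Rd d))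
      = ⇑(sliceCLE hω).toHomeomorph := by
    funext p; exact (sliceCLE_apply hω p).symm
  rw [this]
  exact (sliceCLE hω).toHomeomorph.measurableEmbedding

lemma slice_integral (hω : ‖ω‖ = 1) (h : Rd d → ℂ) (hint : Integrable h) :
    ∫ x, h x = ∫ s : ℝ, ∫ y : ((ℝ ∙ ω)ᗮ : Submodule ℝ (Rd d)), h (s • ω + (y : Rd d)) := by
  rw [← (mpT hω).integral_comp (meT hω) h]
  rw [← Measure.volume_eq_prod]
  exact integral_prod _ (((mpT hω).integrable_comp_emb (meT hω)).mpr hint)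

variable (f : SchwartzMap (Rd d) ℂ)

lemma inner_slice (hω : ‖ω‖ = 1) (s ν : ℝ) (y : ((ℝ ∙ ω)ᗮ : Submodule ℝ (Rd d))) :
    (inner ℝ (s • ω + (y : Rd d)) (ν • ω) : ℝ) = s * ν := by
  have h2 : (inner ℝ (y : Rd d) ω : ℝ) = 0 := by
    rw [real_inner_comm]; exact inner_omega_mem_orthogonal y.2
  have h3 : (inner ℝ ω ω : ℝ) = 1 := by
    rw [real_inner_self_eq_norm_sq, hω]; norm_num
  rw [inner_add_left, real_inner_smul_left, real_inner_smul_right,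
    real_inner_smul_right, h2, h3]
  ring

lemma integrand_integrable (ξ : Rd d) :
    Integrable (fun x : Rd d => Complex.exp (-Complex.I * ((inner ℝ x ξ : ℝ) : ℂ)) * f x) := by
  refine f.integrable.bdd_mul (c := 1) ?_ (Eventually.of_forall fun x => ?_)
  · refine (Complex.continuous_exp.comp ?_).aestronglyMeasurable
    exact continuous_const.mul (Complex.continuous_ofReal.comp
      (continuous_id.inner continuous_const))
  · rw [Complex.norm_exp]
    simp

lemma key_slice (hω : ‖ω‖ = 1) (ν : ℝ) :
    FT (⇑f) (ν • ω) =
      ∫ t : ℝ, Complex.exp (-Complex.I * t * ν) *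
        ∫ y : ((ℝ ∙ ω)ᗮ : Submodule ℝ (Rd d)), f (t • ω + (y : Rd d)) := by
  rw [FT, slice_integral hω _ (integrand_integrable f (ν • ω))]
  refine integral_congr_ae (Eventually.of_forall fun t => ?_)
  simp only [inner_slice hω]
  rw [← MeasureTheory.integral_const_mul]
  refine integral_congr_ae (Eventually.of_forall fun y => ?_)
  push_cast
  ring_nf

lemma norm_le_slice (hω : ‖ω‖ = 1) (t : ℝ) (y : ((ℝ ∙ ω)ᗮ : Submodule ℝ (Rd d))) :
    ‖(y : Rd d)‖ ≤ ‖t • ω + (y : Rd d)‖ := by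
  have h0 : (inner ℝ (t • ω) (y : Rd d) : ℝ) = 0 := by
    rw [real_inner_smul_left, inner_omega_mem_orthogonal y.2, mul_zero]
  have := norm_add_sq_real (t • ω) (y : Rd d)
  rw [h0] at this
  nlinarith [norm_nonneg (t • ω + (y : Rd d)), norm_nonneg ((y : Rd d)),
    sq_nonneg ‖t • ω‖]

lemma g_cont (hω : ‖ω‖ = 1) :
    Continuous (fun t : ℝ => ∫ y : ((ℝ ∙ ω)ᗮ : Submodule ℝ (Rd d)), f (t • ω + (y : Rd d))) := by
  classical
  set K := ((ℝ ∙ ω)ᗮ : Submodule ℝ (Rd d))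
  set n := Module.finrank ℝ K
  set C : ℝ := 2 ^ (n+1) * ((Finset.Iic ((n+1), 0)).sup
      fun m => SchwartzMap.seminorm ℝ m.1 m.2) f with hC
  have hbound : ∀ (t : ℝ) (y : K), ‖f (t • ω + (y : Rd d))‖ ≤
      C * ((1 + ‖y‖) ^ ((n+1) : ℕ))⁻¹ := by
    intro t y
    have h1 : (1 + ‖(y : Rd d)‖) ^ (n+1) * ‖f (t • ω + (y : Rd d))‖ ≤ C := by
      have h2 := SchwartzMap.one_add_le_sup_seminorm_apply (𝕜 := ℝ) (m := ((n+1), 0))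
        le_rfl le_rfl f (t • ω + (y : Rd d))
      rw [norm_iteratedFDeriv_zero] at h2
      refine le_trans ?_ h2
      gcongr
      exact norm_le_slice hω t y
    have hpos : (0:ℝ) < (1 + ‖(y : Rd d)‖) ^ ((n+1):ℕ) := by positivity
    rw [← le_div_iff₀' hpos, div_eq_mul_inv] at h1
    exact h1
  have hint : Integrable (fun y : K => C * ((1 + ‖y‖) ^ ((n+1) : ℕ))⁻¹) := by
    have h3 : Integrable (fun y : K => (1 + ‖y‖) ^ (-((n+1:ℕ) : ℝ))) :=
      integrable_one_add_norm (by exact_mod_cast Nat.lt_succ_self n)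
    have h4 : (fun y : K => C * ((1 + ‖y‖) ^ ((n+1) : ℕ))⁻¹)
        = fun y : K => C * (1 + ‖y‖) ^ (-((n+1:ℕ) : ℝ)) := by
      funext y
      rw [Real.rpow_neg (by positivity), Real.rpow_natCast]
    rw [h4]
    exact h3.const_mul C
  refine continuous_of_dominated ?_ ?_ hint ?_
  · exact fun t => (f.continuous.comp
      (continuous_const.add continuous_subtype_val)).aestronglyMeasurable
  · exact fun t => Eventually.of_forall fun y => hbound t y
  · exact Eventually.of_forall fun y => (f.continuous.comp
      ((continuous_id.smul continuous_const).add continuous_const))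

lemma FT_eq_fourier (ν : ℝ) :
    FT (⇑f) ((2 * π * ν) • ω) = 𝓕 (⇑f) (ν • ω) := by
  rw [Real.fourier_eq', FT]
  refine integral_congr_ae (Eventually.of_forall fun x => ?_)
  simp only [smul_eq_mul]
  have h : (inner ℝ x ((2*π*ν) • ω) : ℝ) = 2*π* (inner ℝ x (ν • ω) : ℝ) := by
    rw [real_inner_smul_right, real_inner_smul_right]; ring
  rw [h]
  congr 1
  push_cast
  ring

lemma FTf_omega_integrable (hω : ‖ω‖ = 1) :
    Integrable (fun ν : ℝ => 𝓕 (⇑f) (ν • ω)) := by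
  set F := SchwartzMap.fourierTransformCLM ℝ f with hF
  have hFeq : ∀ ξ, 𝓕 (⇑f) ξ = F ξ := fun ξ => by
    rw [hF, SchwartzMap.fourierTransformCLM_apply, SchwartzMap.fourier_coe]
  obtain ⟨C0, -, h0⟩ := F.decay 0 0
  obtain ⟨C2, -, h2⟩ := F.decay 2 0
  refine (integrable_inv_one_add_sq.const_mul (C0 + C2)).mono' ?_ ?_
  · have : Continuous fun ν : ℝ => 𝓕 (⇑f) (ν • ω) := by
      simp only [hFeq]
      exact F.continuous.comp (continuous_id.smul continuous_const)
    exact this.aestronglyMeasurable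
  · refine Eventually.of_forall fun ν => ?_
    rw [hFeq]
    have hn : ‖ν • ω‖ = |ν| := by
      rw [norm_smul, hω, Real.norm_eq_abs, mul_one]
    have h0' := h0 (ν • ω)
    have h2' := h2 (ν • ω)
    rw [norm_iteratedFDeriv_zero] at h0' h2'
    rw [pow_zero, one_mul] at h0'
    rw [hn] at h2'
    have hsq : |ν|^2 = ν^2 := sq_abs ν
    have hb : ‖F (ν • ω)‖ ≤ (C0 + C2) / (1 + ν^2) := by
      rw [le_div_iff₀ (by positivity)]
      nlinarith [norm_nonneg (F (ν • ω))]
    rw [div_eq_mul_inv] at hb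
    exact hb

theorem radon_eq_inv_fourier' (hω : ‖ω‖ = 1) (s : ℝ) :
    (∫ y : ((ℝ ∙ ω)ᗮ : Submodule ℝ (Rd d)), f (s • ω + (y : Rd d))) =
      ((2 * π : ℝ) : ℂ)⁻¹ *
        ∫ ν : ℝ, Complex.exp (Complex.I * (s : ℂ) * (ν : ℂ)) * FT (⇑f) (ν • ω) := by
  classical
  set K := ((ℝ ∙ ω)ᗮ : Submodule ℝ (Rd d))
  set g : ℝ → ℂ := fun t => ∫ y : K, f (t • ω + (y : Rd d)) with hgdef
  have hg_cont : Continuous g := g_cont f hω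
  have hfT : Integrable (fun p : ℝ × K => f (p.1 • ω + (p.2 : Rd d))) (volume.prod volume) :=
    ((mpT hω).integrable_comp_emb (meT hω)).mpr f.integrable
  have hg_int : Integrable g := hfT.integral_prod_left
  have hFg : 𝓕 g = fun ν : ℝ => 𝓕 (⇑f) (ν • ω) := by
    funext ν
    rw [Real.fourier_real_eq_integral_exp_smul, ← FT_eq_fourier f ν,
      key_slice f hω (2*π*ν)]
    refine integral_congr_ae (Eventually.of_forall fun t => ?_)
    simp only [smul_eq_mul]
    congr 2
    push_cast
    ring
  have hFg_int : Integrable (𝓕 g) := by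
    rw [hFg]; exact FTf_omega_integrable f hω
  have hinv := hg_cont.fourierInv_fourier_eq hg_int hFg_int
  set G : ℝ → ℂ := fun ν => Complex.exp (Complex.I * (s:ℂ) * (ν:ℂ)) * FT (⇑f) (ν • ω) with hGdef
  have hcv := MeasureTheory.Measure.integral_comp_mul_left G (2*π)
  have h2π : |(2*π)⁻¹| = (2*π)⁻¹ := abs_of_pos (by positivity)
  have hint : ∫ ν, G ν = (2*π) • ∫ x, G (2*π*x) := by
    rw [hcv, h2π, smul_smul, mul_inv_cancel₀ (by positivity), one_smul]
  show g s = ((2 * π : ℝ) : ℂ)⁻¹ * ∫ ν, G ν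
  rw [hint]
  have hGx : ∀ x : ℝ, G (2*π*x) = Complex.exp (↑(2*π*(x*s)) * Complex.I) • 𝓕 g x := by
    intro x
    rw [hGdef]
    simp only []
    rw [FT_eq_fourier f x, hFg]
    rw [smul_eq_mul]
    congr 1
    push_cast
    ring
  have hGint : ∫ x, G (2*π*x) = 𝓕⁻ (𝓕 g) s := by
    rw [Real.fourierInv_eq']
    refine integral_congr_ae (Eventually.of_forall fun v => ?_)
    simp only []
    rw [hGx v]
    have : (inner ℝ v s : ℝ) = v * s := by simp [RCLike.inner_apply, mul_comm]
    rw [this]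
  have h2πc : ((2*π:ℝ):ℂ) ≠ 0 := by
    exact_mod_cast (by positivity : (0:ℝ) < 2*π).ne'
  rw [hGint, hinv, Complex.real_smul, ← mul_assoc, inv_mul_cancel₀ h2πc, one_mul]

end RadonAux

/-- The Radon transform of a Schwartz function along the hyperplane
`{y : ω·y = s}` equals the inverse one-dimensional Fourier transform of `ν ↦ f̂(νω)` at `s`. -/
theorem radon_eq_inv_fourier (d : ℕ) (hd : 1 ≤ d) (f : SchwartzMap (Rd d) ℂ)
    (ω : Rd d) (hω : ‖ω‖ = 1) (s : ℝ) :
    (∫ y : ((ℝ ∙ ω)ᗮ : Submodule ℝ (Rd d)), f (s • ω + (y : Rd d))) =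
      ((2 * π : ℝ) : ℂ)⁻¹ *
        ∫ ν : ℝ, Complex.exp (Complex.I * (s : ℂ) * (ν : ℂ)) * FT (⇑f) (ν • ω) :=
  radon_eq_inv_fourier' f hω s
end
end
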